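/- (Barycentric invariance) For every finite abstract simplicial complex G and every m ≥ 1, w_m(G_1) = w_m(G), where G_1 is the Barycentric refinement of G. -/

import Mathlib

open Finset

variable {α : Type*} [DecidableEq α]

/-- The star `U(x) = {y ∈ G : x ⊆ y}` of a simplex `x` in the complex `G`. -/
def starC (G : Finset (Finset α)) (x : Finset α) : Finset (Finset α) :=
  G.filter (fun y => x ⊆ y)

/-- The unit ball `B(x)`: the closure of the star `U(x)`. -/
def ballC (G : Finset (Finset α)) (x : Finset α) : Finset (Finset α) :=
  G.filter (fun z => ∃ y ∈ G, x ⊆ y ∧ z ⊆ y)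

/-- The unit sphere `S(x) = B(x) \ U(x)`. -/
def sphereC (G : Finset (Finset α)) (x : Finset α) : Finset (Finset α) :=
  ballC G x \ starC G x

/-- `G` is a finite abstract simplicial complex: a finite set of nonempty finite sets
closed under taking nonempty subsets. -/
def IsComplex (G : Finset (Finset α)) : Prop :=
  (∀ x ∈ G, x.Nonempty) ∧ ∀ x ∈ G, ∀ y, y ⊆ x → y.Nonempty → y ∈ G

/-- The intersection `x_1 ∩ ... ∩ x_m` of a tuple of finite sets (for `m ≥ 1`). -/
def interTuple {m : ℕ} (X : Fin m → Finset α) : Finset α :=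
  (Finset.univ.sup X).filter (fun v => ∀ j, v ∈ X j)

/-- The `m`-th characteristic `w_m(A)`. -/
def wm (m : ℕ) (A : Finset (Finset α)) : ℤ :=
  ∑ X ∈ Fintype.piFinset (fun _ : Fin m => A),
    if interTuple X ∈ A then ∏ j, (-1 : ℤ) ^ ((X j).card - 1) else 0

/-- `U` is open in the star topology on `G`: a union of stars. -/
def SCOpen (G U : Finset (Finset α)) : Prop :=
  ∃ T ⊆ G, U = T.biUnion (fun x => starC G x)

/-- The Barycentric refinement `G₁` of `G`: the complex of all nonempty chains of
simplices of `G` ordered by inclusion (the order complex of `G`). -/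
def bary (G : Finset (Finset ℕ)) : Finset (Finset (Finset ℕ)) :=
  G.powerset.filter (fun c => c.Nonempty ∧ ∀ x ∈ c, ∀ y ∈ c, x ⊆ y ∨ y ⊆ x)

variable {β : Type*} [DecidableEq β]




/-- All chains (including the empty one) inside a finite family of finite sets. -/
def chainsF (S : Finset (Finset β)) : Finset (Finset (Finset β)) :=
  S.powerset.filter (fun c => ∀ a ∈ c, ∀ b ∈ c, a ⊆ b ∨ b ⊆ a)

/-- Signed sum over chains in `S` containing `d`. -/
def dsum (S d : Finset (Finset β)) : ℤ :=
  ∑ c ∈ (chainsF S).filter (fun c => d ⊆ c), (-1 : ℤ) ^ c.card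

/-- Open interval `(z, w)` in the subset lattice. -/
def Ov (z w : Finset β) : Finset (Finset β) :=
  w.ssubsets.filter (fun y => z ⊂ y)

lemma mem_chainsF {S c : Finset (Finset β)} :
    c ∈ chainsF S ↔ c ⊆ S ∧ ∀ a ∈ c, ∀ b ∈ c, a ⊆ b ∨ b ⊆ a := by
  simp [chainsF]

lemma mem_Ov {z w y : Finset β} : y ∈ Ov z w ↔ z ⊂ y ∧ y ⊂ w := by
  simp [Ov, mem_ssubsets]; tauto

lemma neg_one_pow_congr_mod {a b : ℕ} (h : a % 2 = b % 2) : (-1 : ℤ) ^ a = (-1 : ℤ) ^ b := by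
  rcases Nat.even_or_odd a with ha | ha
  · have hb : Even b := Nat.even_iff.2 (by rw [← h]; exact Nat.even_iff.1 ha)
    rw [Even.neg_one_pow ha, Even.neg_one_pow hb]
  · have hb : Odd b := Nat.odd_iff.2 (by rw [← h]; exact Nat.odd_iff.1 ha)
    rw [Odd.neg_one_pow ha, Odd.neg_one_pow hb]

lemma chain_exists_max (c : Finset (Finset β)) (hc : ∀ a ∈ c, ∀ b ∈ c, a ⊆ b ∨ b ⊆ a)
    (hne : c.Nonempty) : ∃ x ∈ c, ∀ y ∈ c, y ⊆ x := by
  induction c using Finset.induction_on with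
  | empty => exact absurd hne (by simp)
  | @insert a s ha ih =>
    by_cases hs : s.Nonempty
    · obtain ⟨x, hx, hmax⟩ := ih (fun u hu v hv => hc u (mem_insert_of_mem hu) v (mem_insert_of_mem hv)) hs
      rcases hc a (mem_insert_self a s) x (mem_insert_of_mem hx) with h | h
      · exact ⟨x, mem_insert_of_mem hx, fun y hy => by
          rcases mem_insert.1 hy with rfl | hy; exact h; exact hmax y hy⟩
      · exact ⟨a, mem_insert_self a s, fun y hy => by
          rcases mem_insert.1 hy with rfl | hy; exact Subset.refl _
          exact (hmax y hy).trans h⟩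
    · rw [not_nonempty_iff_eq_empty] at hs
      subst hs
      exact ⟨a, mem_insert_self a ∅, fun y hy => by
        rcases mem_insert.1 hy with rfl | hy; exact Subset.refl _; simp at hy⟩

lemma chain_exists_min (c : Finset (Finset β)) (hc : ∀ a ∈ c, ∀ b ∈ c, a ⊆ b ∨ b ⊆ a)
    (hne : c.Nonempty) : ∃ x ∈ c, ∀ y ∈ c, x ⊆ y := by
  induction c using Finset.induction_on with
  | empty => exact absurd hne (by simp)
  | @insert a s ha ih =>
    by_cases hs : s.Nonempty
    · obtain ⟨x, hx, hmin⟩ := ih (fun u hu v hv => hc u (mem_insert_of_mem hu) v (mem_insert_of_mem hv)) hs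
      rcases hc a (mem_insert_self a s) x (mem_insert_of_mem hx) with h | h
      · exact ⟨a, mem_insert_self a s, fun y hy => by
          rcases mem_insert.1 hy with rfl | hy; exact Subset.refl _
          exact h.trans (hmin y hy)⟩
      · exact ⟨x, mem_insert_of_mem hx, fun y hy => by
          rcases mem_insert.1 hy with rfl | hy; exact h; exact hmin y hy⟩
    · rw [not_nonempty_iff_eq_empty] at hs
      subst hs
      exact ⟨a, mem_insert_self a ∅, fun y hy => by
        rcases mem_insert.1 hy with rfl | hy; exact Subset.refl _; simp at hy⟩

lemma chain_sup_mem (c : Finset (Finset β)) (hc : ∀ a ∈ c, ∀ b ∈ c, a ⊆ b ∨ b ⊆ a)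
    (hne : c.Nonempty) : c.sup id ∈ c ∧ ∀ y ∈ c, y ⊆ c.sup id := by
  obtain ⟨x, hx, hmax⟩ := chain_exists_max c hc hne
  have hsup : c.sup id = x := by
    apply le_antisymm
    · exact Finset.sup_le fun y hy => Finset.le_iff_subset.2 (hmax y hy)
    · exact Finset.le_sup (f := id) hx
  rw [hsup]
  exact ⟨hx, hmax⟩


lemma dsum_adjoin (S d : Finset (Finset β)) (w : Finset β) (hwS : w ∈ S)
    (hcomp : ∀ y ∈ S, y ⊆ w ∨ w ⊆ y) (hwd : w ∉ d) :
    dsum S (insert w d) = - dsum (S.erase w) d := by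
  rw [dsum, dsum, ← Finset.sum_neg_distrib]
  apply Finset.sum_nbij' (i := fun c => c.erase w) (j := fun c => insert w c)
  · intro c hc
    rw [mem_filter, mem_chainsF] at hc ⊢
    obtain ⟨⟨hcS, hch⟩, hdc⟩ := hc
    have hwc : w ∈ c := hdc (mem_insert_self w d)
    refine ⟨⟨fun y hy => ?_, fun a ha b hb => hch a (mem_of_mem_erase ha) b (mem_of_mem_erase hb)⟩, ?_⟩
    · exact mem_erase.2 ⟨(mem_erase.1 hy).1, hcS (mem_of_mem_erase hy)⟩
    · intro y hy
      exact mem_erase.2 ⟨fun h => hwd (h ▸ hy), hdc (mem_insert_of_mem hy)⟩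
  · intro c hc
    rw [mem_filter, mem_chainsF] at hc ⊢
    obtain ⟨⟨hcS, hch⟩, hdc⟩ := hc
    refine ⟨⟨?_, ?_⟩, ?_⟩
    · intro y hy
      rcases mem_insert.1 hy with rfl | hy
      · exact hwS
      · exact mem_of_mem_erase (hcS hy)
    · intro a ha b hb
      rcases mem_insert.1 ha with ha' | ha'
      · subst ha'
        rcases mem_insert.1 hb with hb' | hb'
        · subst hb'; exact Or.inl (Subset.refl _)
        · exact (hcomp b (mem_of_mem_erase (hcS hb'))).symm
      · rcases mem_insert.1 hb with hb' | hb'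
        · subst hb'; exact hcomp a (mem_of_mem_erase (hcS ha'))
        · exact hch a ha' b hb'
    · exact insert_subset_insert w hdc
  · intro c hc
    rw [mem_filter] at hc
    exact insert_erase (hc.2 (mem_insert_self w d))
  · intro c hc
    rw [mem_filter, mem_chainsF] at hc
    exact erase_insert (fun h => (mem_erase.1 (hc.1.1 h)).1 rfl)
  · intro c hc
    rw [mem_filter] at hc
    have hwc : w ∈ c := hc.2 (mem_insert_self w d)
    have : c.card = (c.erase w).card + 1 := by
      rw [card_erase_of_mem hwc]
      have := Finset.card_pos.2 ⟨w, hwc⟩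
      omega
    rw [this, pow_succ]
    ring


lemma dsum_split (S d : Finset (Finset β)) (w : Finset β)
    (hd : ∀ a ∈ d, ∀ b ∈ d, a ⊆ b ∨ b ⊆ a) (hw : w ∈ d) :
    dsum S d = dsum (S.filter (fun y => y ⊂ w)) (d.filter (fun y => ¬ w ⊆ y)) *
               dsum (S.filter (fun y => w ⊆ y)) (d.filter (fun y => w ⊆ y)) := by
  rw [dsum, dsum, dsum, Finset.sum_mul_sum, ← Finset.sum_product']
  apply Finset.sum_nbij'
    (i := fun c => (c.filter (fun y => ¬ w ⊆ y), c.filter (fun y => w ⊆ y)))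
    (j := fun p => p.1 ∪ p.2)
  · -- maps into product
    intro c hc
    rw [mem_filter, mem_chainsF] at hc
    obtain ⟨⟨hcS, hch⟩, hdc⟩ := hc
    have hwc : w ∈ c := hdc hw
    rw [Finset.mem_product]
    constructor
    · rw [mem_filter, mem_chainsF]
      refine ⟨⟨fun y hy => ?_, fun a ha b hb =>
        hch a (mem_filter.1 ha).1 b (mem_filter.1 hb).1⟩, ?_⟩
      · rw [mem_filter] at hy
        rw [mem_filter]
        refine ⟨hcS hy.1, ?_⟩
        rcases hch y hy.1 w hwc with h | h
        · exact lt_of_le_of_ne (Finset.le_iff_subset.2 h) (fun he => hy.2 (he ▸ Subset.refl w))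
        · exact absurd h hy.2
      · exact fun y hy => mem_filter.2 ⟨hdc (mem_filter.1 hy).1, (mem_filter.1 hy).2⟩
    · rw [mem_filter, mem_chainsF]
      refine ⟨⟨fun y hy => ?_, fun a ha b hb =>
        hch a (mem_filter.1 ha).1 b (mem_filter.1 hb).1⟩, ?_⟩
      · rw [mem_filter] at hy
        exact mem_filter.2 ⟨hcS hy.1, hy.2⟩
      · exact fun y hy => mem_filter.2 ⟨hdc (mem_filter.1 hy).1, (mem_filter.1 hy).2⟩
  · -- maps back
    intro p hp
    rw [Finset.mem_product] at hp
    obtain ⟨h1, h2⟩ := hp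
    rw [mem_filter, mem_chainsF] at h1 h2 ⊢
    obtain ⟨⟨h1S, h1ch⟩, h1d⟩ := h1
    obtain ⟨⟨h2S, h2ch⟩, h2d⟩ := h2
    have key1 : ∀ y ∈ p.1, y ⊂ w := fun y hy => (mem_filter.1 (h1S hy)).2
    have key2 : ∀ y ∈ p.2, w ⊆ y := fun y hy => (mem_filter.1 (h2S hy)).2
    refine ⟨⟨fun y hy => ?_, fun a ha b hb => ?_⟩, fun y hy => ?_⟩
    · rcases Finset.mem_union.1 hy with h | h
      · exact (mem_filter.1 (h1S h)).1
      · exact (mem_filter.1 (h2S h)).1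
    · rcases Finset.mem_union.1 ha with ha' | ha' <;> rcases Finset.mem_union.1 hb with hb' | hb'
      · exact h1ch a ha' b hb'
      · exact Or.inl ((subset_of_ssubset (key1 a ha')).trans (key2 b hb'))
      · exact Or.inr ((subset_of_ssubset (key1 b hb')).trans (key2 a ha'))
      · exact h2ch a ha' b hb'
    · by_cases hwy : w ⊆ y
      · exact Finset.mem_union_right _ (h2d (mem_filter.2 ⟨hy, hwy⟩))
      · exact Finset.mem_union_left _ (h1d (mem_filter.2 ⟨hy, hwy⟩))
  · -- left inverse
    intro c hc
    simp only
    rw [Finset.union_comm, Finset.filter_union_filter_not_eq]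
  · -- right inverse
    intro p hp
    rw [Finset.mem_product] at hp
    obtain ⟨h1, h2⟩ := hp
    rw [mem_filter, mem_chainsF] at h1 h2
    have key1 : ∀ y ∈ p.1, ¬ w ⊆ y :=
      fun y hy hwy => (mem_filter.1 (h1.1.1 hy)).2.not_subset hwy
    have key2 : ∀ y ∈ p.2, w ⊆ y := fun y hy => (mem_filter.1 (h2.1.1 hy)).2
    have e1 : (p.1 ∪ p.2).filter (fun y => ¬ w ⊆ y) = p.1 := by
      rw [Finset.filter_union]
      rw [Finset.filter_true_of_mem key1, Finset.filter_false_of_mem (fun y hy => by simp [key2 y hy]), Finset.union_empty]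
    have e2 : (p.1 ∪ p.2).filter (fun y => w ⊆ y) = p.2 := by
      rw [Finset.filter_union]
      rw [Finset.filter_false_of_mem (fun y hy => key1 y hy), Finset.filter_true_of_mem key2, Finset.empty_union]
    exact Prod.ext e1 e2
  · -- weights
    intro c hc
    simp only
    have hdisj : Disjoint (c.filter (fun y => ¬ w ⊆ y)) (c.filter (fun y => w ⊆ y)) := by
      apply Finset.disjoint_filter_filter'
      exact disjoint_compl_left
    have : (c.filter (fun y => ¬ w ⊆ y)).card + (c.filter (fun y => w ⊆ y)).card = c.card := by
      rw [add_comm]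
      exact Finset.card_filter_add_card_filter_not _
    rw [← this, pow_add]


/-- Fibers of the max map on nonempty chains. -/
lemma fiber_eq (S : Finset (Finset β)) (x : Finset β) :
    ((chainsF S).erase ∅).filter (fun c => c.sup id = x) =
    (chainsF (S.filter (fun y => y ⊆ x))).filter (fun c => {x} ⊆ c) := by
  ext c
  simp only [mem_filter, mem_erase, mem_chainsF, singleton_subset_iff]
  constructor
  · rintro ⟨⟨hne, hcS, hch⟩, hsup⟩
    have hnec : c.Nonempty := nonempty_iff_ne_empty.2 hne
    obtain ⟨hmem, hmax⟩ := chain_sup_mem c hch hnec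
    refine ⟨⟨fun y hy => mem_filter.2 ⟨hcS hy, hsup ▸ hmax y hy⟩, hch⟩, hsup ▸ hmem⟩
  · rintro ⟨⟨hcS, hch⟩, hxc⟩
    have hnec : c.Nonempty := ⟨x, hxc⟩
    refine ⟨⟨nonempty_iff_ne_empty.1 hnec, fun y hy => (mem_filter.1 (hcS hy)).1, hch⟩, ?_⟩
    apply le_antisymm
    · exact Finset.sup_le fun y hy => Finset.le_iff_subset.2 (mem_filter.1 (hcS hy)).2
    · exact Finset.le_sup (f := id) hxc

lemma dsum_maxgroup (S : Finset (Finset β)) :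
    dsum S ∅ = 1 + ∑ x ∈ S, dsum (S.filter (fun y => y ⊆ x)) {x} := by
  rw [dsum, Finset.filter_true_of_mem (fun c _ => empty_subset c)]
  have hemp : (∅ : Finset (Finset β)) ∈ chainsF S := by simp [mem_chainsF]
  rw [← Finset.add_sum_erase _ _ hemp]
  simp only [card_empty, pow_zero]
  congr 1
  rw [← Finset.sum_fiberwise_of_maps_to (g := fun c => c.sup id) (t := S) ?hmap]
  case hmap =>
    intro c hc
    rw [mem_erase, mem_chainsF] at hc
    obtain ⟨hmem, _⟩ := chain_sup_mem c hc.2.2 (nonempty_iff_ne_empty.2 hc.1)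
    exact hc.2.1 hmem
  apply Finset.sum_congr rfl
  intro x hx
  rw [dsum, fiber_eq]
section TEST
variable {β : Type*} [DecidableEq β]
open Finset

lemma sum_interval (z w : Finset β) (h : z ⊂ w) :
    ∑ y ∈ w.powerset.filter (fun y => z ⊆ y), (-1:ℤ)^y.card = 0 := by
  have step : ∑ y ∈ w.powerset.filter (fun y => z ⊆ y), (-1:ℤ)^y.card
      = ∑ t ∈ (w \ z).powerset, (-1:ℤ)^(z.card + t.card) := by
    apply Finset.sum_nbij' (i := fun y => y \ z) (j := fun t => z ∪ t)
    · intro y hy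
      rw [mem_filter, mem_powerset] at hy
      exact mem_powerset.2 (sdiff_subset_sdiff hy.1 (Subset.refl z))
    · intro t ht
      rw [mem_powerset] at ht
      rw [mem_filter, mem_powerset]
      exact ⟨union_subset h.subset (ht.trans sdiff_subset), subset_union_left⟩
    · intro y hy
      rw [mem_filter] at hy
      exact union_sdiff_of_subset hy.2
    · intro t ht
      rw [mem_powerset] at ht
      exact union_sdiff_cancel_left (disjoint_of_subset_right ht sdiff_disjoint.symm)
    · intro y hy
      rw [mem_filter] at hy
      congr 1
      have := card_sdiff_add_card_eq_card hy.2
      omega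
  rw [step]
  have : ∑ t ∈ (w \ z).powerset, (-1:ℤ)^(z.card + t.card)
      = (-1:ℤ)^z.card * ∑ t ∈ (w \ z).powerset, (-1:ℤ)^t.card := by
    rw [mul_sum]
    exact Finset.sum_congr rfl fun t _ => by rw [pow_add]
  rw [this, sum_powerset_neg_one_pow_card_of_nonempty (sdiff_nonempty.2 h.not_subset), mul_zero]

lemma interval_eq (z w : Finset β) (h : z ⊂ w) :
    w.powerset.filter (fun y => z ⊆ y) = insert z (insert w (Ov z w)) := by
  ext y
  simp only [mem_filter, mem_powerset, mem_insert, mem_Ov]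
  constructor
  · rintro ⟨hyw, hzy⟩
    by_cases h1 : y = z
    · exact Or.inl h1
    by_cases h2 : y = w
    · exact Or.inr (Or.inl h2)
    · exact Or.inr (Or.inr ⟨lt_of_le_of_ne (Finset.le_iff_subset.2 hzy) (Ne.symm h1),
        lt_of_le_of_ne (Finset.le_iff_subset.2 hyw) h2⟩)
  · rintro (rfl | rfl | ⟨h1, h2⟩)
    · exact ⟨h.subset, Subset.refl _⟩
    · exact ⟨Subset.refl _, h.subset⟩
    · exact ⟨h2.subset, h1.subset⟩

lemma csum_Ov_aux : ∀ n : ℕ, ∀ w z : Finset β, w.card ≤ n → z ⊂ w →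
    dsum (Ov z w) ∅ = (-1:ℤ)^(w.card + z.card + 1) := by
  intro n
  induction n with
  | zero =>
    intro w z hcard hzw
    have : w = ∅ := card_eq_zero.1 (Nat.le_zero.1 hcard)
    subst this
    exact absurd hzw (Finset.not_ssubset_empty z)
  | succ n ih =>
    intro w z hcard hzw
    rw [dsum_maxgroup]
    have hstep : ∀ y ∈ Ov z w, dsum ((Ov z w).filter (fun v => v ⊆ y)) {y}
        = (-1:ℤ)^(y.card + z.card) := by
      intro y hy
      rw [mem_Ov] at hy
      have hyOv : y ∈ (Ov z w).filter (fun v => v ⊆ y) :=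
        mem_filter.2 ⟨mem_Ov.2 hy, Subset.refl y⟩
      have hsing : ({y} : Finset (Finset β)) = insert y ∅ := rfl
      rw [hsing, dsum_adjoin _ _ y hyOv (fun v hv => Or.inl (mem_filter.1 hv).2)
        (notMem_empty y)]
      have herase : ((Ov z w).filter (fun v => v ⊆ y)).erase y = Ov z y := by
        ext v
        simp only [mem_erase, mem_filter, mem_Ov]
        constructor
        · rintro ⟨hne, ⟨hzv, _⟩, hvy⟩
          exact ⟨hzv, lt_of_le_of_ne (Finset.le_iff_subset.2 hvy) hne⟩
        · rintro ⟨hzv, hvy⟩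
          exact ⟨hvy.ne, ⟨hzv, hvy.trans hy.2⟩, hvy.subset⟩
      rw [herase, ih y z (by have := card_lt_card hy.2; omega) hy.1, pow_succ]
      ring
    rw [Finset.sum_congr rfl hstep]
    have hsum : ∑ y ∈ Ov z w, (-1:ℤ)^(y.card + z.card)
        = (-1:ℤ)^z.card * ∑ y ∈ Ov z w, (-1:ℤ)^y.card := by
      rw [mul_sum]
      exact Finset.sum_congr rfl fun y _ => by rw [pow_add]; ring
    have hzw' : z ≠ w := hzw.ne
    have hznot : z ∉ insert w (Ov z w) := by
      simp only [mem_insert, mem_Ov]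
      rintro (rfl | ⟨h1, _⟩)
      · exact hzw' rfl
      · exact h1.ne rfl
    have hwnot : w ∉ Ov z w := by
      simp only [mem_Ov]
      rintro ⟨_, h2⟩
      exact h2.ne rfl
    have e1 : ∑ y ∈ insert w (Ov z w), (-1:ℤ)^y.card
        = (-1:ℤ)^w.card + ∑ y ∈ Ov z w, (-1:ℤ)^y.card := Finset.sum_insert hwnot
    have e2 : ∑ y ∈ insert z (insert w (Ov z w)), (-1:ℤ)^y.card
        = (-1:ℤ)^z.card + ∑ y ∈ insert w (Ov z w), (-1:ℤ)^y.card := Finset.sum_insert hznot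
    have e3 := sum_interval z w hzw
    rw [interval_eq z w hzw] at e3
    have hOv : ∑ y ∈ Ov z w, (-1:ℤ)^y.card = -(-1:ℤ)^z.card - (-1:ℤ)^w.card := by linarith
    rw [hsum, hOv]
    have hzz : (-1:ℤ)^z.card * (-1:ℤ)^z.card = 1 := by
      rw [← pow_add, neg_one_pow_congr_mod (show (z.card + z.card) % 2 = 0 % 2 by omega), pow_zero]
    have hfin : (-1:ℤ)^(w.card + z.card + 1) = -((-1:ℤ)^z.card * (-1:ℤ)^w.card) := by
      rw [pow_succ, pow_add]; ring
    rw [hfin]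
    nlinarith [hzz]
end TEST
section T2
variable {β : Type*} [DecidableEq β]
open Finset

lemma dsum_Ov_chain : ∀ n : ℕ, ∀ d : Finset (Finset β), ∀ z x : Finset β, d.card ≤ n →
    (∀ a ∈ d, ∀ b ∈ d, a ⊆ b ∨ b ⊆ a) → z ⊂ x → (∀ y ∈ d, z ⊂ y ∧ y ⊂ x) →
    dsum (Ov z x) d = (-1:ℤ)^(x.card + z.card + 1) := by
  intro n
  induction n with
  | zero =>
    intro d z x hcard _ hzx _
    have : d = ∅ := card_eq_zero.1 (Nat.le_zero.1 hcard)
    subst this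
    exact csum_Ov_aux x.card x z le_rfl hzx
  | succ n ih =>
    intro d z x hcard hch hzx hmem
    by_cases hd : d = ∅
    · subst hd
      exact csum_Ov_aux x.card x z le_rfl hzx
    have hne : d.Nonempty := nonempty_iff_ne_empty.2 hd
    obtain ⟨z', hz'd, hmin⟩ := chain_exists_min d hch hne
    obtain ⟨hzz', hz'x⟩ := hmem z' hz'd
    rw [dsum_split (Ov z x) d z' hch hz'd]
    have hd1 : d.filter (fun y => ¬ z' ⊆ y) = ∅ :=
      Finset.filter_eq_empty_iff.2 fun y hy => not_not_intro (hmin y hy)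
    have hS1 : (Ov z x).filter (fun y => y ⊂ z') = Ov z z' := by
      ext v
      simp only [mem_filter, mem_Ov]
      constructor
      · rintro ⟨⟨hzv, _⟩, hvz'⟩; exact ⟨hzv, hvz'⟩
      · rintro ⟨hzv, hvz'⟩; exact ⟨⟨hzv, hvz'.trans hz'x⟩, hvz'⟩
    have hd2 : d.filter (fun y => z' ⊆ y) = d := Finset.filter_true_of_mem hmin
    rw [hd1, hS1, hd2, csum_Ov_aux z'.card z' z le_rfl hzz']
    have hz'S2 : z' ∈ (Ov z x).filter (fun y => z' ⊆ y) :=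
      mem_filter.2 ⟨mem_Ov.2 ⟨hzz', hz'x⟩, Subset.refl z'⟩
    have hS2e : ((Ov z x).filter (fun y => z' ⊆ y)).erase z' = Ov z' x := by
      ext v
      simp only [mem_erase, mem_filter, mem_Ov]
      constructor
      · rintro ⟨hne', ⟨_, hvx⟩, hz'v⟩
        exact ⟨lt_of_le_of_ne (Finset.le_iff_subset.2 hz'v) (Ne.symm hne'), hvx⟩
      · rintro ⟨hz'v, hvx⟩
        exact ⟨hz'v.ne', ⟨hzz'.trans hz'v, hvx⟩, hz'v.subset⟩
    have h2 : dsum ((Ov z x).filter (fun y => z' ⊆ y)) d = -(-1:ℤ)^(x.card + z'.card + 1) := by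
      rw [← insert_erase hz'd,
        dsum_adjoin _ _ z' hz'S2 (fun v hv => Or.inr (mem_filter.1 hv).2) (notMem_erase z' d),
        hS2e]
      rw [ih (d.erase z') z' x (by rw [card_erase_of_mem hz'd]; have := card_pos.2 hne; omega)
        (fun a ha b hb => hch a (mem_of_mem_erase ha) b (mem_of_mem_erase hb)) hz'x
        (fun y hy => ⟨lt_of_le_of_ne (Finset.le_iff_subset.2 (hmin y (mem_of_mem_erase hy)))
          (Ne.symm (mem_erase.1 hy).1), (hmem y (mem_of_mem_erase hy)).2⟩)]
    rw [h2]
    have key : (-1:ℤ)^(z'.card+z.card+1) * -(-1:ℤ)^(x.card+z'.card+1)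
        = (-1:ℤ)^((z'.card+z.card+1)+(x.card+z'.card+1)+1) := by
      rw [pow_succ ((-1:ℤ)) ((z'.card+z.card+1)+(x.card+z'.card+1)), pow_add]
      ring
    rw [key]
    exact neg_one_pow_congr_mod (by omega)
end T2
section T3
variable {β : Type*} [DecidableEq β]
open Finset


lemma dsum_star (A : Finset (Finset β)) (hA : IsComplex A) (x : Finset β) (hx : x ∈ A) :
    dsum (A.filter (fun y => y ⊆ x)) {x} = (-1:ℤ)^x.card := by
  have hxf : x ∈ A.filter (fun y => y ⊆ x) := mem_filter.2 ⟨hx, Subset.refl x⟩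
  have hsing : ({x} : Finset (Finset β)) = insert x ∅ := rfl
  rw [hsing, dsum_adjoin _ _ x hxf (fun v hv => Or.inl (mem_filter.1 hv).2) (notMem_empty x)]
  have herase : (A.filter (fun y => y ⊆ x)).erase x = Ov ∅ x := by
    ext v
    simp only [mem_erase, mem_filter, mem_Ov]
    constructor
    · rintro ⟨hne, hvA, hvx⟩
      exact ⟨(hA.1 v hvA).empty_ssubset, lt_of_le_of_ne (Finset.le_iff_subset.2 hvx) hne⟩
    · rintro ⟨hv, hvx⟩
      exact ⟨hvx.ne, hA.2 x hx v hvx.subset (Finset.empty_ssubset.mp hv), hvx.subset⟩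
  rw [herase, csum_Ov_aux x.card x ∅ le_rfl ((hA.1 x hx).empty_ssubset), card_empty, pow_succ]
  ring
end T3
section T4
variable {β : Type*} [DecidableEq β]
open Finset

lemma e_eq (A : Finset (Finset β)) (hA : IsComplex A) (z : Finset β) (hz : z ∈ A) :
    ∑ y ∈ A.filter (fun y => z ⊆ y), (-1:ℤ)^(y.card - 1)
      = (-1:ℤ)^(z.card - 1) * dsum (A.filter (fun y => z ⊂ y)) ∅ := by
  have hz1 : 1 ≤ z.card := card_pos.2 (hA.1 z hz)
  have hterm : ∀ y ∈ A.filter (fun y => z ⊂ y),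
      dsum ((A.filter (fun y => z ⊂ y)).filter (fun v => v ⊆ y)) {y}
        = (-1:ℤ)^(y.card + z.card) := by
    intro y hy
    rw [mem_filter] at hy
    have hyf : y ∈ (A.filter (fun y => z ⊂ y)).filter (fun v => v ⊆ y) :=
      mem_filter.2 ⟨mem_filter.2 hy, Subset.refl y⟩
    have hsing : ({y} : Finset (Finset β)) = insert y ∅ := rfl
    rw [hsing, dsum_adjoin _ _ y hyf (fun v hv => Or.inl (mem_filter.1 hv).2) (notMem_empty y)]
    have herase : ((A.filter (fun y => z ⊂ y)).filter (fun v => v ⊆ y)).erase y = Ov z y := by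
      ext v
      simp only [mem_erase, mem_filter, mem_Ov]
      constructor
      · rintro ⟨hne, ⟨_, hzv⟩, hvy⟩
        exact ⟨hzv, lt_of_le_of_ne (Finset.le_iff_subset.2 hvy) hne⟩
      · rintro ⟨hzv, hvy⟩
        refine ⟨hvy.ne, ⟨⟨hA.2 y hy.1 v hvy.subset ?_, hzv⟩, hvy.subset⟩⟩
        exact Finset.Nonempty.mono hzv.subset (hA.1 z hz)
    rw [herase, csum_Ov_aux y.card y z le_rfl hy.2, pow_succ]
    ring
  have hmg := dsum_maxgroup (A.filter (fun y => z ⊂ y))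
  rw [Finset.sum_congr rfl hterm] at hmg
  have hsplit : A.filter (fun y => z ⊆ y) = insert z (A.filter (fun y => z ⊂ y)) := by
    ext y
    simp only [mem_insert, mem_filter]
    constructor
    · rintro ⟨hyA, hzy⟩
      by_cases h : y = z
      · exact Or.inl h
      · exact Or.inr ⟨hyA, lt_of_le_of_ne (Finset.le_iff_subset.2 hzy) (Ne.symm h)⟩
    · rintro (rfl | ⟨hyA, hzy⟩)
      · exact ⟨hz, Subset.refl y⟩
      · exact ⟨hyA, hzy.subset⟩
  have hznot : z ∉ A.filter (fun y => z ⊂ y) := by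
    simp only [mem_filter]
    rintro ⟨_, h⟩
    exact h.ne rfl
  rw [hsplit, Finset.sum_insert hznot, hmg, mul_add, mul_one, mul_sum]
  congr 1
  apply Finset.sum_congr rfl
  intro y hy
  rw [mem_filter] at hy
  have hy1 : 1 ≤ y.card := card_pos.2 (hA.1 y hy.1)
  rw [← pow_add]
  exact neg_one_pow_congr_mod (by omega)
end T4
section T5
variable {β : Type*} [DecidableEq β]
open Finset


lemma indicator_lemma (A : Finset (Finset β)) (hA : IsComplex A) (s : Finset β)
    (hs : s.Nonempty → s ∈ A) :
    ∑ z ∈ A.filter (fun z => z ⊆ s), (-1:ℤ)^(z.card - 1) = if s ∈ A then 1 else 0 := by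
  by_cases hsA : s ∈ A
  · rw [if_pos hsA]
    have hsne : s.Nonempty := hA.1 s hsA
    have hset : A.filter (fun z => z ⊆ s) = s.powerset.filter (fun z => ¬ z = ∅) := by
      ext z
      simp only [mem_filter, mem_powerset]
      constructor
      · rintro ⟨hzA, hzs⟩
        exact ⟨hzs, nonempty_iff_ne_empty.1 (hA.1 z hzA)⟩
      · rintro ⟨hzs, hzne⟩
        exact ⟨hA.2 s hsA z hzs (nonempty_iff_ne_empty.2 hzne), hzs⟩
    rw [hset]
    have h0 : ∑ z ∈ s.powerset, (-1:ℤ)^z.card = 0 :=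
      sum_powerset_neg_one_pow_card_of_nonempty hsne
    have hsplitf := Finset.sum_filter_add_sum_filter_not s.powerset (fun z => z = ∅)
      (fun z => (-1:ℤ)^z.card)
    have hfe : s.powerset.filter (fun z => z = ∅) = {∅} := by
      ext z
      simp only [mem_filter, mem_powerset, mem_singleton]
      constructor
      · rintro ⟨_, h⟩; exact h
      · rintro rfl; exact ⟨empty_subset s, rfl⟩
    rw [hfe, h0] at hsplitf
    simp only [sum_singleton, card_empty, pow_zero] at hsplitf
    have hne : ∑ z ∈ s.powerset.filter (fun z => ¬ z = ∅), (-1:ℤ)^z.card = -1 := by linarith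
    have hneg : ∑ z ∈ s.powerset.filter (fun z => ¬ z = ∅), (-1:ℤ)^(z.card-1)
        = -∑ z ∈ s.powerset.filter (fun z => ¬ z = ∅), (-1:ℤ)^z.card := by
      rw [← Finset.sum_neg_distrib]
      apply Finset.sum_congr rfl
      intro z hz
      have h1 : 1 ≤ z.card :=
        card_pos.2 (nonempty_iff_ne_empty.2 (mem_filter.1 hz).2)
      have hc : z.card = (z.card - 1) + 1 := by omega
      rw [hc, pow_succ]
      ring_nf
      congr 1
      omega
    rw [hneg, hne]
    norm_num
  · rw [if_neg hsA]
    have hse : s = ∅ := by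
      by_contra h
      exact hsA (hs (nonempty_iff_ne_empty.2 h))
    subst hse
    have : A.filter (fun z => z ⊆ (∅:Finset β)) = ∅ :=
      Finset.filter_eq_empty_iff.2 (fun z hz hsub =>
        (nonempty_iff_ne_empty.1 (hA.1 z hz)) (subset_empty.1 hsub))
    rw [this, sum_empty]

lemma wm_expand (A : Finset (Finset β)) (hA : IsComplex A) (m : ℕ) (hm : 1 ≤ m) :
    wm m A = ∑ z ∈ A, (-1:ℤ)^(z.card - 1) *
      (∑ y ∈ A.filter (fun y => z ⊆ y), (-1:ℤ)^(y.card - 1))^m := by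
  rw [wm]
  have hstep1 : ∀ X ∈ Fintype.piFinset (fun _ : Fin m => A),
      (if interTuple X ∈ A then ∏ j, (-1:ℤ)^((X j).card - 1) else 0)
      = ∑ z ∈ A, (if z ⊆ interTuple X then
          (-1:ℤ)^(z.card-1) * ∏ j, (-1:ℤ)^((X j).card - 1) else 0) := by
    intro X hX
    have hXj : ∀ j, X j ∈ A := by
      rw [Fintype.mem_piFinset] at hX
      exact hX
    have hs : (interTuple X).Nonempty → interTuple X ∈ A := by
      intro hne
      have hsub : interTuple X ⊆ X ⟨0, hm⟩ := fun v hv => (mem_filter.1 hv).2 ⟨0, hm⟩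
      exact hA.2 (X ⟨0, hm⟩) (hXj _) _ hsub hne
    rw [← Finset.sum_filter, ← Finset.sum_mul, indicator_lemma A hA _ hs]
    by_cases h : interTuple X ∈ A <;> simp [h]
  rw [Finset.sum_congr rfl hstep1, Finset.sum_comm]
  apply Finset.sum_congr rfl
  intro z hz
  have hcongr : ∀ X ∈ Fintype.piFinset (fun _ : Fin m => A),
      (if z ⊆ interTuple X then (-1:ℤ)^(z.card-1) * ∏ j, (-1:ℤ)^((X j).card - 1) else 0)
      = (if ∀ j, z ⊆ X j then (-1:ℤ)^(z.card-1) * ∏ j, (-1:ℤ)^((X j).card - 1) else 0) := by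
    intro X hX
    have hiff : (z ⊆ interTuple X) ↔ (∀ j, z ⊆ X j) := by
      constructor
      · intro h j v hv
        exact (mem_filter.1 (h hv)).2 j
      · intro h v hv
        refine mem_filter.2 ⟨?_, fun j => h j hv⟩
        exact (Finset.le_sup (f := X) (mem_univ (⟨0, hm⟩ : Fin m)) : X ⟨0,hm⟩ ⊆ _) (h ⟨0, hm⟩ hv)
    rw [if_congr hiff rfl rfl]
  rw [Finset.sum_congr rfl hcongr, ← Finset.sum_filter]
  have hfilter : (Fintype.piFinset (fun _ : Fin m => A)).filter (fun X => ∀ j, z ⊆ X j)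
      = Fintype.piFinset (fun _ : Fin m => A.filter (fun y => z ⊆ y)) := by
    ext X
    simp only [mem_filter, Fintype.mem_piFinset]
    constructor
    · rintro ⟨h1, h2⟩
      exact fun j => ⟨h1 j, h2 j⟩
    · intro h
      exact ⟨fun j => (h j).1, fun j => (h j).2⟩
  rw [hfilter, ← Finset.mul_sum, Finset.sum_pow']
end T5
section T6
open Finset


lemma mem_bary {G : Finset (Finset ℕ)} {c : Finset (Finset ℕ)} :
    c ∈ bary G ↔ c ⊆ G ∧ c.Nonempty ∧ ∀ x ∈ c, ∀ y ∈ c, x ⊆ y ∨ y ⊆ x := by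
  rw [bary, mem_filter, mem_powerset]

lemma bary_isComplex (G : Finset (Finset ℕ)) : IsComplex (bary G) := by
  constructor
  · intro c hc
    exact (mem_bary.1 hc).2.1
  · intro c hc d hdc hdne
    rw [mem_bary] at hc ⊢
    exact ⟨hdc.trans hc.1, hdne, fun a ha b hb => hc.2.2 a (hdc ha) b (hdc hb)⟩

lemma e1_eq (G : Finset (Finset ℕ)) (hG : IsComplex G) (d : Finset (Finset ℕ))
    (hd : d ∈ bary G) :
    ∑ f ∈ (bary G).filter (fun f => d ⊆ f), (-1:ℤ)^(f.card - 1)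
      = (-1:ℤ)^((d.sup id).card + 1) * dsum (G.filter (fun y => (d.sup id) ⊂ y)) ∅ := by
  rw [mem_bary] at hd
  obtain ⟨hdG, hdne, hdch⟩ := hd
  obtain ⟨hxd, hmax⟩ := chain_sup_mem d hdch hdne
  set x := d.sup id with hxdef
  have hxG : x ∈ G := hdG hxd
  have hxne : x.Nonempty := hG.1 x hxG
  -- Step 1 : LHS = - dsum G d
  have step1 : ∑ f ∈ (bary G).filter (fun f => d ⊆ f), (-1:ℤ)^(f.card - 1)
      = - dsum G d := by
    have hset : (bary G).filter (fun f => d ⊆ f)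
        = (chainsF G).filter (fun f => d ⊆ f) := by
      ext f
      simp only [mem_filter, mem_bary, mem_chainsF]
      constructor
      · rintro ⟨⟨h1, _, h3⟩, h4⟩
        exact ⟨⟨h1, h3⟩, h4⟩
      · rintro ⟨⟨h1, h3⟩, h4⟩
        exact ⟨⟨h1, hdne.mono h4, h3⟩, h4⟩
    rw [hset, dsum, ← Finset.sum_neg_distrib]
    apply Finset.sum_congr rfl
    intro f hf
    rw [mem_filter] at hf
    have hfne : f.Nonempty := hdne.mono hf.2
    have h1 : 1 ≤ f.card := card_pos.2 hfne
    have hc : f.card = (f.card - 1) + 1 := by omega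
    rw [hc, pow_succ]
    ring_nf
    congr 1
    omega
  rw [step1, dsum_split G d x hdch hxd]
  -- second factor
  have hxf : x ∈ G.filter (fun y => x ⊆ y) := mem_filter.2 ⟨hxG, Subset.refl x⟩
  have hd2 : d.filter (fun y => x ⊆ y) = {x} := by
    ext y
    simp only [mem_filter, mem_singleton]
    constructor
    · rintro ⟨hyd, hxy⟩
      exact Subset.antisymm (hmax y hyd) hxy |>.symm ▸ rfl
    · rintro rfl
      exact ⟨hxd, Subset.refl x⟩
  have hsing : ({x} : Finset (Finset ℕ)) = insert x ∅ := rfl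
  have herase : (G.filter (fun y => x ⊆ y)).erase x = G.filter (fun y => x ⊂ y) := by
    ext y
    simp only [mem_erase, mem_filter]
    constructor
    · rintro ⟨hne, hyG, hxy⟩
      exact ⟨hyG, lt_of_le_of_ne (Finset.le_iff_subset.2 hxy) (Ne.symm hne)⟩
    · rintro ⟨hyG, hxy⟩
      exact ⟨hxy.ne', hyG, hxy.subset⟩
  have hfac2 : dsum (G.filter (fun y => x ⊆ y)) (d.filter (fun y => x ⊆ y))
      = - dsum (G.filter (fun y => x ⊂ y)) ∅ := by
    rw [hd2, hsing, dsum_adjoin _ _ x hxf (fun v hv => Or.inr (mem_filter.1 hv).2)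
      (notMem_empty x), herase]
  -- first factor
  have hS1 : G.filter (fun y => y ⊂ x) = Ov ∅ x := by
    ext y
    simp only [mem_filter, mem_Ov]
    constructor
    · rintro ⟨hyG, hyx⟩
      exact ⟨(hG.1 y hyG).empty_ssubset, hyx⟩
    · rintro ⟨hy, hyx⟩
      exact ⟨hG.2 x hxG y hyx.subset (Finset.empty_ssubset.mp hy), hyx⟩
  have hd1 : d.filter (fun y => ¬ x ⊆ y) = d.erase x := by
    ext y
    simp only [mem_filter, mem_erase]
    constructor
    · rintro ⟨hyd, hxy⟩
      exact ⟨fun h => hxy (h ▸ Subset.refl x), hyd⟩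
    · rintro ⟨hne, hyd⟩
      exact ⟨hyd, fun h => hne (Subset.antisymm (hmax y hyd) h)⟩
  have hfac1 : dsum (G.filter (fun y => y ⊂ x)) (d.filter (fun y => ¬ x ⊆ y))
      = (-1:ℤ)^(x.card + 1) := by
    rw [hS1, hd1]
    have := dsum_Ov_chain (d.erase x).card (d.erase x) ∅ x le_rfl
      (fun a ha b hb => hdch a (mem_of_mem_erase ha) b (mem_of_mem_erase hb))
      hxne.empty_ssubset
      (fun y hy => ⟨(hG.1 y (hdG (mem_of_mem_erase hy))).empty_ssubset,
        lt_of_le_of_ne (Finset.le_iff_subset.2 (hmax y (mem_of_mem_erase hy)))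
          (mem_erase.1 hy).1⟩)
    rw [this, card_empty]
  rw [hfac1, hfac2]
  ring
end T6
section T7
open Finset

theorem bary_main (G : Finset (Finset ℕ)) (hG : IsComplex G)
    (m : ℕ) (hm : 1 ≤ m) :
    wm m (bary G) = wm m G := by
  have hbc := bary_isComplex G
  rw [wm_expand _ hbc m hm, wm_expand _ hG m hm]
  have hGside : ∀ z ∈ G, (-1:ℤ)^(z.card-1) *
      (∑ y ∈ G.filter (fun y => z ⊆ y), (-1:ℤ)^(y.card-1))^m
      = (-1:ℤ)^(z.card+1) *
        ((-1:ℤ)^(z.card+1) * dsum (G.filter (fun y => z ⊂ y)) ∅)^m := by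
    intro z hz
    have h1 : 1 ≤ z.card := card_pos.2 (hG.1 z hz)
    have hsgn : (-1:ℤ)^(z.card-1) = (-1:ℤ)^(z.card+1) := neg_one_pow_congr_mod (by omega)
    rw [e_eq G hG z hz, hsgn]
  have hBside : ∀ d ∈ bary G, (-1:ℤ)^(d.card-1) *
      (∑ f ∈ (bary G).filter (fun f => d ⊆ f), (-1:ℤ)^(f.card-1))^m
      = (-1:ℤ)^(d.card-1) *
        ((-1:ℤ)^((d.sup id).card+1) * dsum (G.filter (fun y => (d.sup id) ⊂ y)) ∅)^m := by
    intro d hd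
    rw [e1_eq G hG d hd]
  rw [Finset.sum_congr rfl hBside, Finset.sum_congr rfl hGside]
  have hmap : ∀ d ∈ bary G, d.sup id ∈ G := by
    intro d hd
    rw [mem_bary] at hd
    exact hd.1 (chain_sup_mem d hd.2.2 hd.2.1).1
  rw [← Finset.sum_fiberwise_of_maps_to (g := fun d => d.sup id) (t := G) hmap]
  apply Finset.sum_congr rfl
  intro x hx
  have hinner : ∀ d ∈ (bary G).filter (fun d => d.sup id = x),
      (-1:ℤ)^(d.card-1) *
        ((-1:ℤ)^((d.sup id).card+1) * dsum (G.filter (fun y => (d.sup id) ⊂ y)) ∅)^m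
      = (-1:ℤ)^(d.card-1) *
        ((-1:ℤ)^(x.card+1) * dsum (G.filter (fun y => x ⊂ y)) ∅)^m := by
    intro d hd
    rw [(mem_filter.1 hd).2]
  rw [Finset.sum_congr rfl hinner, ← Finset.sum_mul]
  have hfib : (bary G).filter (fun d => d.sup id = x)
      = ((chainsF G).erase ∅).filter (fun c => c.sup id = x) := by
    ext c
    simp only [mem_filter, mem_bary, mem_erase, mem_chainsF]
    constructor
    · rintro ⟨⟨h1, h2, h3⟩, h4⟩
      exact ⟨⟨nonempty_iff_ne_empty.1 h2, h1, h3⟩, h4⟩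
    · rintro ⟨⟨h1, h2, h3⟩, h4⟩
      exact ⟨⟨h2, nonempty_iff_ne_empty.2 h1, h3⟩, h4⟩
  have hsum : ∑ d ∈ (bary G).filter (fun d => d.sup id = x), (-1:ℤ)^(d.card-1)
      = (-1:ℤ)^(x.card+1) := by
    rw [hfib, fiber_eq]
    have hterm : ∀ c ∈ (chainsF (G.filter (fun y => y ⊆ x))).filter
        (fun c => ({x} : Finset (Finset ℕ)) ⊆ c),
        (-1:ℤ)^(c.card-1) = -(-1:ℤ)^c.card := by
      intro c hc
      have hxc : x ∈ c := singleton_subset_iff.1 (mem_filter.1 hc).2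
      have h1 : 1 ≤ c.card := card_pos.2 ⟨x, hxc⟩
      have hcc : c.card = (c.card-1)+1 := by omega
      rw [hcc, pow_succ]
      ring_nf
      congr 1
      omega
    rw [Finset.sum_congr rfl hterm, Finset.sum_neg_distrib]
    have hdd : (∑ c ∈ (chainsF (G.filter (fun y => y ⊆ x))).filter
        (fun c => ({x} : Finset (Finset ℕ)) ⊆ c), (-1:ℤ)^c.card)
        = dsum (G.filter (fun y => y ⊆ x)) {x} := rfl
    rw [hdd, dsum_star G hG x hx, pow_succ]
    ring
  rw [hsum]
end T7

/-- Barycentric invariance: `w_m(G₁) = w_m(G)` for all `m ≥ 1`. -/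
theorem barycentric_invariance (G : Finset (Finset ℕ)) (hG : IsComplex G)
    (m : ℕ) (hm : 1 ≤ m) :
    wm m (bary G) = wm m G :=
  bary_main G hG m hm
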